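/- arXiv:2402.16435 — 4 statements merged into one kernel-verified Lean document; each statement's English description precedes it below -/
import Mathlib

section
/- Let p and p̃ be probability densities on ℝ such that sup_{f ∈ B₁(ℝ)} |∫f p − ∫f p̃| ≤ ε, where B₁(ℝ) is the set of measurable functions bounded by 1 in sup norm. Let ỹ₁,…,ỹ_K be i.i.d. from p̃, y ~ p independent, and A_K = |{i : ỹᵢ < y}|. Then for every n ∈ {0,…,K}, 1/(K+1) − ε ≤ P(A_K = n) ≤ 1/(K+1) + ε. -/
open MeasureTheory ProbabilityTheory Set Nat Filter

lemma rank_beta_nat (n m : ℕ) :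
    ∫ t in (0:ℝ)..1, t ^ n * (1 - t) ^ m = (n ! * m ! : ℝ) / ((n + m + 1)! : ℝ) := by
  have h := Complex.Gamma_mul_Gamma_eq_betaIntegral (s := (n+1 : ℂ)) (t := (m+1 : ℂ))
    (by simp; positivity) (by simp; positivity)
  have h1 : Complex.Gamma (n+1) = (n ! : ℂ) := Complex.Gamma_nat_eq_factorial n
  have h2 : Complex.Gamma (m+1) = (m ! : ℂ) := Complex.Gamma_nat_eq_factorial m
  have h3 : Complex.Gamma ((n+1:ℂ) + (m+1:ℂ)) = ((n+m+1)! : ℂ) := by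
    have : ((n+1:ℂ) + (m+1:ℂ)) = ((n+m+1 : ℕ) : ℂ) + 1 := by push_cast; ring
    rw [this, Complex.Gamma_nat_eq_factorial]
  have hne : ((n+m+1)! : ℂ) ≠ 0 := Nat.cast_ne_zero.2 (Nat.factorial_ne_zero _)
  have hb : Complex.betaIntegral (n+1) (m+1) = (n ! * m ! : ℂ) / ((n+m+1)! : ℂ) := by
    rw [h1, h2, h3] at h
    rw [eq_div_iff hne]
    linear_combination -h
  have hint : Complex.betaIntegral (n+1) (m+1)
      = ∫ t in (0:ℝ)..1, ((t ^ n * (1 - t) ^ m : ℝ) : ℂ) := by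
    rw [Complex.betaIntegral]
    refine intervalIntegral.integral_congr fun t ht => ?_
    have h4 : ((n:ℂ)+1-1) = (n : ℂ) := by ring
    have h5 : ((m:ℂ)+1-1) = (m : ℂ) := by ring
    rw [h4, h5, Complex.cpow_natCast, Complex.cpow_natCast]
    push_cast
    ring
  rw [intervalIntegral.integral_ofReal] at hint
  rw [hb] at hint
  have := congrArg Complex.re hint
  simpa using this.symm

lemma rank_cdf_cont (ν : Measure ℝ) [IsProbabilityMeasure ν] [NullSingletonClass ν] :
     Continuous (cdf ν) := by
  rw [continuous_iff_continuousAt]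
  intro x
  rw [(monotone_cdf ν).continuousAt_iff_leftLim_eq_rightLim, (cdf ν).rightLim_eq]
  have h : (cdf ν).measure {x} = 0 := by rw [measure_cdf]; exact measure_singleton x
  rw [StieltjesFunction.measure_singleton] at h
  have h2 : Function.leftLim (cdf ν) x ≤ cdf ν x := (monotone_cdf ν).leftLim_le le_rfl
  have := ENNReal.ofReal_eq_zero.mp h
  linarith

lemma rank_cdf_map (ν : Measure ℝ) [IsProbabilityMeasure ν] [NullSingletonClass ν] :
     Measure.map (cdf ν) ν = volume.restrict (Icc (0:ℝ) 1) := by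
  have hmeas : Measurable (cdf ν) := (monotone_cdf ν).measurable
  have hprob : IsProbabilityMeasure (volume.restrict (Icc (0:ℝ) 1)) := by
    constructor
    simp [Real.volume_Icc]
  have : IsProbabilityMeasure (Measure.map (cdf ν) ν) :=
    Measure.isProbabilityMeasure_map hmeas.aemeasurable
  refine Measure.ext_of_Iic _ _ fun t => ?_
  rw [Measure.map_apply hmeas measurableSet_Iic, Measure.restrict_apply measurableSet_Iic]
  rcases lt_or_ge t 0 with ht | ht
  · have h1 : cdf ν ⁻¹' Iic t = ∅ := by
      ext x; simp only [mem_preimage, mem_Iic, mem_empty_iff_false, iff_false, not_le]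
      exact ht.trans_le (cdf_nonneg ν x)
    have h2 : Iic t ∩ Icc (0:ℝ) 1 = ∅ := by
      ext x; simp only [mem_inter_iff, mem_Iic, mem_Icc, mem_empty_iff_false, iff_false]
      rintro ⟨hx, hx0, -⟩; linarith
    rw [h1, h2]; simp
  rcases le_or_gt 1 t with ht1 | ht1
  · have h1 : cdf ν ⁻¹' Iic t = univ := by
      ext x; simp only [mem_preimage, mem_Iic, mem_univ, iff_true]
      exact (cdf_le_one ν x).trans ht1
    have h2 : Iic t ∩ Icc (0:ℝ) 1 = Icc 0 1 := by
      ext x; simp only [mem_inter_iff, mem_Iic, mem_Icc]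
      constructor
      · rintro ⟨-, h⟩; exact h
      · rintro ⟨h0, h1'⟩; exact ⟨h1'.trans ht1, h0, h1'⟩
    rw [h1, h2]; simp [Real.volume_Icc]
  · have h2 : Iic t ∩ Icc (0:ℝ) 1 = Icc 0 t := by
      ext x; simp only [mem_inter_iff, mem_Iic, mem_Icc]
      constructor
      · rintro ⟨h, h0, -⟩; exact ⟨h0, h⟩
      · rintro ⟨h0, h'⟩; exact ⟨h', h0, h'.trans ht1.le⟩
    rw [h2, Real.volume_Icc, sub_zero]
    rcases eq_empty_or_nonempty (cdf ν ⁻¹' Iic t) with hS | hS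
    · have ht0 : t ≤ 0 := by
        refine ge_of_tendsto (tendsto_cdf_atBot ν) (Filter.Eventually.of_forall fun x => ?_)
        by_contra hc
        push_neg at hc
        exact (eq_empty_iff_forall_notMem.mp hS x) (by simpa using hc.le)
      have : t = 0 := le_antisymm ht0 ht
      rw [hS, this]; simp
    · set S := cdf ν ⁻¹' Iic t with hSdef
      have hclosed : IsClosed S := IsClosed.preimage (rank_cdf_cont ν) isClosed_Iic
      obtain ⟨x₀, hx₀⟩ : ∃ x₀, t < cdf ν x₀ := by
        rcases (tendsto_cdf_atTop ν).eventually_const_lt ht1 |>.exists with ⟨x₀, hx₀⟩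
        exact ⟨x₀, hx₀⟩
      have hbdd : BddAbove S := by
        refine ⟨x₀, fun x hx => ?_⟩
        by_contra hc
        push_neg at hc
        exact absurd (monotone_cdf ν hc.le) (not_le.mpr (lt_of_le_of_lt hx hx₀))
      set a := sSup S with ha
      have haS : a ∈ S := hclosed.csSup_mem hS hbdd
      have hSa : S = Iic a := by
        ext x
        constructor
        · exact fun hx => le_csSup hbdd hx
        · intro hx
          exact le_trans (monotone_cdf ν hx) haS
      have hFa_le : cdf ν a ≤ t := haS
      have hFa_ge : t ≤ cdf ν a := by
        have htend : Tendsto (cdf ν) (nhdsWithin a (Ioi a)) (nhds (cdf ν a)) :=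
          ((rank_cdf_cont ν).continuousAt).continuousWithinAt
        refine ge_of_tendsto htend ?_
        filter_upwards [self_mem_nhdsWithin] with x hx
        by_contra hc
        push_neg at hc
        exact absurd (le_csSup hbdd (show x ∈ S from hc.le)) (not_le.mpr hx)
      have : cdf ν a = t := le_antisymm hFa_le hFa_ge
      rw [hSa, ← this, ofReal_cdf ν a]

lemma rank_joint_law {Ω : Type*} [MeasurableSpace Ω] (P : Measure Ω) [IsProbabilityMeasure P]
    {n : ℕ} (X : Fin n → Ω → ℝ) (hmeas : ∀ i, Measurable (X i))
    (hindep : iIndepFun X P) :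
    Measure.map (fun ω i => X i ω) P = Measure.pi (fun i => Measure.map (X i) P) := by
  have hp : ∀ i, IsProbabilityMeasure (Measure.map (X i) P) := fun i =>
    Measure.isProbabilityMeasure_map (hmeas i).aemeasurable
  refine (Measure.pi_eq fun s hs => ?_).symm
  rw [Measure.map_apply (measurable_pi_lambda _ fun i => hmeas i) (MeasurableSet.univ_pi hs)]
  have hpre : (fun ω i => X i ω) ⁻¹' (Set.pi univ s) = ⋂ i ∈ Finset.univ, X i ⁻¹' s i := by
    ext ω; simp [Set.mem_pi]
  rw [hpre, hindep.measure_inter_preimage_eq_mul Finset.univ (fun i _ => hs i)]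
  exact Finset.prod_congr rfl fun i _ => (Measure.map_apply (hmeas i) (hs i)).symm

lemma rank_pi_rank (ν : Measure ℝ) [IsProbabilityMeasure ν] (K n : ℕ) (y : ℝ) :
    Measure.pi (fun _ : Fin K => ν)
        {w | (Finset.univ.filter (fun i => w i < y)).card = n}
      = (K.choose n) * ν (Iio y) ^ n * ν (Ici y) ^ (K - n) := by
  have hset : {w : Fin K → ℝ | (Finset.univ.filter (fun i => w i < y)).card = n}
      = ⋃ s ∈ (Finset.powersetCard n (Finset.univ : Finset (Fin K))),
          Set.pi univ (fun i => if i ∈ s then Iio y else Ici y) := by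
    ext w
    simp only [mem_setOf_eq, mem_iUnion, Finset.mem_powersetCard, Set.mem_pi, mem_univ,
      forall_true_left, exists_prop]
    constructor
    · intro h
      refine ⟨Finset.univ.filter (fun i => w i < y), ⟨Finset.subset_univ _, h⟩, fun i => ?_⟩
      by_cases hi : w i < y
      · simp [hi]
      · simp [hi, not_lt.mp hi]
    · rintro ⟨s, ⟨-, hcard⟩, hw⟩
      have : Finset.univ.filter (fun i => w i < y) = s := by
        ext i
        simp only [Finset.mem_filter, Finset.mem_univ, true_and]
        constructor
        · intro hlt
          by_contra hi
          have := hw i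
          rw [if_neg hi] at this
          exact absurd hlt (not_lt.mpr this)
        · intro hi
          have := hw i
          rwa [if_pos hi] at this
      rw [this, hcard]
  rw [hset]
  rw [measure_biUnion_finset ?hd ?hm]
  case hd =>
    intro s hs s' hs' hss
    refine Set.disjoint_left.mpr fun w hw hw' => hss ?_
    simp only [Set.mem_univ_pi] at hw hw'
    ext i
    have h1 := hw i
    have h2 := hw' i
    constructor
    · intro hi
      rw [if_pos hi] at h1
      by_contra hi'
      rw [if_neg hi'] at h2
      exact absurd (show w i < y from h1) (not_lt.mpr (show y ≤ w i from h2))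
    · intro hi
      rw [if_pos hi] at h2
      by_contra hi'
      rw [if_neg hi'] at h1
      exact absurd (show w i < y from h2) (not_lt.mpr (show y ≤ w i from h1))
  case hm =>
    intro s _
    exact MeasurableSet.univ_pi fun i => by
      by_cases hi : i ∈ s <;> simp [hi, measurableSet_Iio, measurableSet_Ici]
  have hterm : ∀ s ∈ Finset.powersetCard n (Finset.univ : Finset (Fin K)),
      Measure.pi (fun _ : Fin K => ν) (Set.pi univ (fun i => if i ∈ s then Iio y else Ici y))
        = ν (Iio y) ^ n * ν (Ici y) ^ (K - n) := by
    intro s hs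
    rw [Finset.mem_powersetCard] at hs
    rw [Measure.pi_pi]
    have : ∀ i : Fin K, ν (if i ∈ s then Iio y else Ici y)
        = if i ∈ s then ν (Iio y) else ν (Ici y) := fun i => apply_ite ν _ _ _
    simp_rw [this]
    rw [Finset.prod_ite, Finset.prod_const, Finset.prod_const]
    have h1 : (Finset.univ.filter (· ∈ s)).card = n := by
      rw [Finset.filter_mem_eq_inter, Finset.univ_inter, hs.2]
    have h2 : (Finset.univ.filter (· ∉ s)).card = K - n := by
      have := Finset.card_filter_add_card_filter_not
        (s := (Finset.univ : Finset (Fin K))) (p := (· ∈ s))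
      simp only [Finset.card_univ, Fintype.card_fin] at this
      omega
    rw [h1, h2]
  rw [Finset.sum_congr rfl hterm, Finset.sum_const, Finset.card_powersetCard,
    Finset.card_univ, Fintype.card_fin, nsmul_eq_mul, mul_assoc]

lemma rank_choose_bound {K n : ℕ} (hn : n ≤ K) {t : ℝ} (h0 : 0 ≤ t) (h1 : t ≤ 1) :
    (K.choose n : ℝ) * t ^ n * (1 - t) ^ (K - n) ≤ 1 := by
  have key : (1:ℝ) = ∑ j ∈ Finset.range (K+1), t ^ j * (1 - t) ^ (K - j) * (K.choose j : ℝ) := by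
    have := add_pow t (1 - t) K
    rw [add_sub_cancel, one_pow] at this
    exact_mod_cast this
  have hmem : n ∈ Finset.range (K + 1) := Finset.mem_range.mpr (Nat.lt_succ_of_le hn)
  calc (K.choose n : ℝ) * t ^ n * (1 - t) ^ (K - n)
      = t ^ n * (1 - t) ^ (K - n) * (K.choose n : ℝ) := by ring
    _ ≤ ∑ j ∈ Finset.range (K+1), t ^ j * (1 - t) ^ (K - j) * (K.choose j : ℝ) := by
        refine Finset.single_le_sum (f := fun j => t ^ j * (1 - t) ^ (K - j) * (K.choose j : ℝ)) (fun j _ => ?_) hmem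
        have h1t : (0:ℝ) ≤ 1 - t := by linarith
        positivity
    _ = 1 := key.symm


/-- **Approximate uniformity of the rank statistic.** Let `μ` (law of the data, with density `p`)
and `ν` (law of the model, with density `p̃`) be atomless probability measures on `ℝ` such that
`|∫ f dμ - ∫ f dν| ≤ ε` for every measurable `f` bounded by `1`.  If `X 0, …, X (K-1)` are i.i.d.
with law `ν`, `X K` is an independent sample with law `μ`, and
`A_K = |{i < K : X i < X K}|`, then `1/(K+1) - ε ≤ P(A_K = n) ≤ 1/(K+1) + ε`
for every `n ∈ {0, …, K}`. -/
theorem rank_statistic_approx_uniform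
    {Ω : Type*} [MeasurableSpace Ω] (P : Measure Ω) [IsProbabilityMeasure P]
    (μ ν : Measure ℝ) [IsProbabilityMeasure μ] [IsProbabilityMeasure ν]
    [NullSingletonClass μ] [NullSingletonClass ν] (ε : ℝ)
    (hε : ∀ f : ℝ → ℝ, Measurable f → (∀ x, |f x| ≤ 1) →
      |∫ x, f x ∂μ - ∫ x, f x ∂ν| ≤ ε)
    (K : ℕ) (X : Fin (K + 1) → Ω → ℝ)
    (hmeas : ∀ i, Measurable (X i))
    (hindep : iIndepFun X P)
    (hlawν : ∀ i : Fin K, Measure.map (X i.castSucc) P = ν)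
    (hlawμ : Measure.map (X (Fin.last K)) P = μ) :
    ∀ n : ℕ, n ≤ K →
      1 / (K + 1) - ε ≤
        (P {ω | (Finset.univ.filter
            (fun i : Fin K => X i.castSucc ω < X (Fin.last K) ω)).card = n}).toReal ∧
      (P {ω | (Finset.univ.filter
            (fun i : Fin K => X i.castSucc ω < X (Fin.last K) ω)).card = n}).toReal
          ≤ 1 / (K + 1) + ε := by
  intro n hn
  set F : ℝ → ℝ := fun x => cdf ν x with hF
  have hFmeas : Measurable F := (monotone_cdf ν).measurable
  have hF0 : ∀ y, 0 ≤ F y := cdf_nonneg ν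
  have hF1 : ∀ y, F y ≤ 1 := cdf_le_one ν
  set f : ℝ → ℝ := fun y => (K.choose n : ℝ) * (F y ^ n * (1 - F y) ^ (K - n)) with hf
  have hfmeas : Measurable f := by
    apply Measurable.const_mul
    exact (hFmeas.pow_const n).mul ((measurable_const.sub hFmeas).pow_const (K - n))
  have hfnonneg : ∀ y, 0 ≤ f y := by
    intro y
    have := hF0 y; have := hF1 y
    have h1t : (0:ℝ) ≤ 1 - F y := by linarith
    positivity
  have hfb : ∀ y, |f y| ≤ 1 := by
    intro y
    rw [abs_of_nonneg (hfnonneg y)]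
    have := rank_choose_bound hn (hF0 y) (hF1 y)
    calc f y = (K.choose n : ℝ) * F y ^ n * (1 - F y) ^ (K - n) := by ring
      _ ≤ 1 := this
  -- Step 1 : P E = ∫⁻ ofReal (f y) ∂μ
  have hstep1 : P {ω | (Finset.univ.filter
        (fun i : Fin K => X i.castSucc ω < X (Fin.last K) ω)).card = n}
      = ∫⁻ y, ENNReal.ofReal (f y) ∂μ := by
    classical
    set J : Ω → (Fin (K+1) → ℝ) := fun ω i => X i ω with hJ
    have hJmeas : Measurable J := measurable_pi_lambda _ fun i => hmeas i
    set B : Set (Fin (K+1) → ℝ) :=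
      {v | (Finset.univ.filter (fun i : Fin K => v i.castSucc < v (Fin.last K))).card = n}
      with hB
    have hBmeas : MeasurableSet B := by
      have hcard : Measurable (fun v : Fin (K+1) → ℝ =>
          (Finset.univ.filter (fun i : Fin K => v i.castSucc < v (Fin.last K))).card) := by
        simp_rw [Finset.card_filter]
        refine Finset.measurable_sum _ fun i _ => ?_
        exact Measurable.ite
          (measurableSet_lt (measurable_pi_apply _) (measurable_pi_apply _))
          measurable_const measurable_const
      exact hcard (measurableSet_singleton n)
    have hEB : {ω | (Finset.univ.filter
        (fun i : Fin K => X i.castSucc ω < X (Fin.last K) ω)).card = n} = J ⁻¹' B := rfl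
    rw [hEB, ← Measure.map_apply hJmeas hBmeas, rank_joint_law P X hmeas hindep]
    set lam : Fin (K+1) → Measure ℝ := fun i => Measure.map (X i) P with hlam
    have hlamprob : ∀ i, IsProbabilityMeasure (lam i) := fun i =>
      Measure.isProbabilityMeasure_map (hmeas i).aemeasurable
    have hmp := measurePreserving_piFinSuccAbove lam (Fin.last K)
    set B' : Set (ℝ × (Fin K → ℝ)) :=
      {q | (Finset.univ.filter (fun i : Fin K => q.2 i < q.1)).card = n} with hB'
    have hB'meas : MeasurableSet B' := by
      have hcard : Measurable (fun q : ℝ × (Fin K → ℝ) =>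
          (Finset.univ.filter (fun i : Fin K => q.2 i < q.1)).card) := by
        simp_rw [Finset.card_filter]
        refine Finset.measurable_sum _ fun i _ => ?_
        exact Measurable.ite
          (measurableSet_lt (measurable_snd.eval) measurable_fst)
          measurable_const measurable_const
      exact hcard (measurableSet_singleton n)
    have hBpre : B = (MeasurableEquiv.piFinSuccAbove (fun _ : Fin (K+1) => ℝ) (Fin.last K))
        ⁻¹' B' := by
      ext v
      simp [hB, hB', MeasurableEquiv.piFinSuccAbove, Fin.succAbove_last, Fin.init]
    rw [hBpre, hmp.measure_preimage hB'meas.nullMeasurableSet]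
    have hν : (fun j : Fin K => lam ((Fin.last K).succAbove j)) = fun _ : Fin K => ν := by
      funext j
      rw [Fin.succAbove_last, hlam]
      exact hlawν j
    have hμ : lam (Fin.last K) = μ := hlawμ
    rw [hν, hμ, Measure.prod_apply hB'meas]
    refine lintegral_congr fun y => ?_
    have hpre : Prod.mk y ⁻¹' B' = {w : Fin K → ℝ |
        (Finset.univ.filter (fun i : Fin K => w i < y)).card = n} := rfl
    rw [hpre, rank_pi_rank]
    have hIio : ν (Iio y) = ENNReal.ofReal (F y) := by
      rw [measure_congr (Iio_ae_eq_Iic (a := y)), ← ofReal_cdf]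
    have hIci : ν (Ici y) = ENNReal.ofReal (1 - F y) := by
      rw [← compl_Iio, measure_compl measurableSet_Iio (measure_ne_top ν _), measure_univ, hIio,
        ENNReal.ofReal_sub 1 (hF0 y), ENNReal.ofReal_one]
    have h1F : (0:ℝ) ≤ 1 - F y := by linarith [hF1 y]
    rw [hIio, hIci, ← ENNReal.ofReal_pow (hF0 y), ← ENNReal.ofReal_pow h1F, mul_assoc,
      ← ENNReal.ofReal_mul (pow_nonneg (hF0 y) n),
      ← ENNReal.ofReal_natCast (K.choose n), ← ENNReal.ofReal_mul (Nat.cast_nonneg _)]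
  -- Step 2 : toReal = ∫ f dμ
  have hstep2 : (P {ω | (Finset.univ.filter
        (fun i : Fin K => X i.castSucc ω < X (Fin.last K) ω)).card = n}).toReal
      = ∫ y, f y ∂μ := by
    rw [hstep1, integral_eq_lintegral_of_nonneg_ae
      (Filter.Eventually.of_forall hfnonneg) hfmeas.aestronglyMeasurable]
  -- Step 3 : ∫ f dν = 1/(K+1)
  have hstep3 : ∫ y, f y ∂ν = 1 / (K + 1 : ℝ) := by
    have hg : Measurable (fun t : ℝ => (K.choose n : ℝ) * (t ^ n * (1 - t) ^ (K - n))) :=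
      measurable_const.mul ((measurable_id.pow_const n).mul
        ((measurable_const.sub measurable_id).pow_const (K - n)))
    have h1 : ∫ y, f y ∂ν
        = ∫ t, (K.choose n : ℝ) * (t ^ n * (1 - t) ^ (K - n)) ∂(Measure.map (cdf ν) ν) :=
      (integral_map hFmeas.aemeasurable hg.aestronglyMeasurable).symm
    rw [h1, rank_cdf_map, integral_Icc_eq_integral_Ioc,
      ← intervalIntegral.integral_of_le (zero_le_one), intervalIntegral.integral_const_mul,
      rank_beta_nat]
    have hKn : n + (K - n) + 1 = K + 1 := by omega
    rw [hKn]
    have hc : ((K.choose n : ℝ) * ((n ! : ℝ) * ((K - n)! : ℝ))) = (K ! : ℝ) := by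
      have := Nat.choose_mul_factorial_mul_factorial hn
      push_cast [← this]
      ring
    have hfact : ((K + 1)! : ℝ) = (K + 1) * (K ! : ℝ) := by
      rw [Nat.factorial_succ]; push_cast; ring
    rw [mul_div_assoc', hc, hfact]
    rw [div_eq_div_iff (by positivity) (by positivity)]
    have : (K ! : ℝ) ≠ 0 := Nat.cast_ne_zero.mpr (Nat.factorial_ne_zero K)
    ring
  have hclose := hε f hfmeas hfb
  rw [hstep3] at hclose
  rw [hstep2]
  rw [abs_le] at hclose
  have hcast : ((K : ℝ) + 1) = ((K + 1 : ℕ) : ℝ) := by push_cast; ring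
  constructor <;> [linarith [hclose.1]; linarith [hclose.2]]
end

section
/- Let p and p̃ be densities on ℝ with cdfs F and F̃, F̃ continuous. If the rank statistic A_K (the number of the K i.i.d. samples from p̃ below an independent sample y from p) is uniform on {0,…,K}, then ∫ F̃(y)ⁿ p(y) dy = 1/(n+1) for all n ∈ {0,1,…,K}. -/
open MeasureTheory ProbabilityTheory Set
open scoped ENNReal NNReal

/-- If the rank statistic `A_K` of an independent sample `y ~ μ` (density `p`) among `K` i.i.d.
samples from `ν` (density `p̃`, continuous cdf `F̃`) is uniform on `{0, …, K}`, then
`∫ F̃(y)^n dμ(y) = 1/(n+1)` for all `n ∈ {0, …, K}`. -/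
theorem uniform_rank_implies_moment_conditions
    {Ω : Type*} [MeasurableSpace Ω] (P : Measure Ω) [IsProbabilityMeasure P]
    (μ ν : Measure ℝ) [IsProbabilityMeasure μ] [IsProbabilityMeasure ν]
    (hcont : Continuous (cdf ν))
    (K : ℕ) (X : Fin (K + 1) → Ω → ℝ)
    (hmeas : ∀ i, Measurable (X i))
    (hindep : iIndepFun X P)
    (hlawν : ∀ i : Fin K, Measure.map (X i.castSucc) P = ν)
    (hlawμ : Measure.map (X (Fin.last K)) P = μ)
    (huniform : ∀ n : ℕ, n ≤ K →
      P {ω | (Finset.univ.filter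
          (fun i : Fin K => X i.castSucc ω < X (Fin.last K) ω)).card = n}
        = 1 / (K + 1)) :
    ∀ n : ℕ, n ≤ K → ∫ y, (cdf ν y) ^ n ∂μ = 1 / (n + 1) := by
  intro n hn
  classical
  -- continuity of the cdf gives `ν (Iio y) = ofReal (cdf ν y)`
  have hq : ∀ y : ℝ, ν (Iio y) = ENNReal.ofReal (cdf ν y) := by
    intro y
    have hsing : ν {y} = 0 := by
      have h2 : Function.leftLim (cdf ν) y = cdf ν y :=
        (monotone_cdf (μ := ν)).continuousWithinAt_Iio_iff_leftLim_eq.1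
          hcont.continuousAt.continuousWithinAt
      have h1 : (cdf ν).measure {y}
          = ENNReal.ofReal (cdf ν y - Function.leftLim (cdf ν) y) :=
        StieltjesFunction.measure_singleton _ y
      rw [measure_cdf, h2, sub_self, ENNReal.ofReal_zero] at h1
      exact h1
    have hIio : Iio y = Iic y \ {y} := by
      rw [Iic_diff_right]
    rw [hIio, measure_diff_null hsing, ← ofReal_cdf]
  -- basic measurability facts
  have hAmeas : ∀ i : Fin K,
      MeasurableSet {ω | X i.castSucc ω < X (Fin.last K) ω} :=
    fun i => measurableSet_lt (hmeas _) (hmeas _)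
  set Cnt : Ω → ℕ := fun ω =>
    (Finset.univ.filter (fun i : Fin K => X i.castSucc ω < X (Fin.last K) ω)).card
    with hCnt
  have hCntmeas : Measurable Cnt := by
    have hrepr : Cnt = fun ω =>
        ∑ i : Fin K, if X i.castSucc ω < X (Fin.last K) ω then 1 else 0 := by
      funext ω; simp only [hCnt, Finset.card_filter]
    rw [hrepr]
    exact Finset.measurable_sum _ fun i _ =>
      Measurable.ite (hAmeas i) measurable_const measurable_const
  set B : ℕ → Set Ω := fun j => {ω | Cnt ω = j} with hB
  have hBmeas : ∀ j, MeasurableSet (B j) := fun j =>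
    hCntmeas (measurableSet_singleton j)
  have hABmeas : ∀ S : Finset (Fin K),
      MeasurableSet {ω | ∀ i ∈ S, X i.castSucc ω < X (Fin.last K) ω} := by
    intro S
    have : {ω | ∀ i ∈ S, X i.castSucc ω < X (Fin.last K) ω}
        = ⋂ i ∈ S, {ω | X i.castSucc ω < X (Fin.last K) ω} := by
      ext ω; simp
    rw [this]
    exact MeasurableSet.biInter S.countable_toSet fun i _ => hAmeas i
  -- Lemma A : probability of a cylinder event
  have lemA : ∀ S : Finset (Fin K),
      P {ω | ∀ i ∈ S, X i.castSucc ω < X (Fin.last K) ω}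
        = ∫⁻ y, (ν (Iio y)) ^ S.card ∂μ := by
    intro S
    set S' : Finset (Fin (K + 1)) := S.map ⟨Fin.castSucc, Fin.castSucc_injective K⟩
      with hS'
    have hS'card : S'.card = S.card := Finset.card_map _
    have hlastS' : Fin.last K ∉ S' := by
      simp only [hS', Finset.mem_map, Function.Embedding.coeFn_mk]
      rintro ⟨j, -, hj⟩
      exact absurd hj (Fin.castSucc_lt_last j).ne
    have hdisj : Disjoint S' ({Fin.last K} : Finset (Fin (K + 1))) := by
      simpa [Finset.disjoint_singleton_right] using hlastS'
    set V : Ω → (S' → ℝ) := fun ω i => X i ω with hV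
    have hVmeas : Measurable V := measurable_pi_lambda _ fun i => hmeas i
    have hindepVY : IndepFun V (X (Fin.last K)) P := by
      have h := hindep.indepFun_finset S' {Fin.last K} hdisj hmeas
      exact h.comp measurable_id
        (measurable_pi_apply
          (⟨Fin.last K, Finset.mem_singleton_self _⟩ : ({Fin.last K} : Finset (Fin (K + 1)))))
    have hmap : Measure.map (fun ω => (V ω, X (Fin.last K) ω)) P
        = (Measure.map V P).prod μ := by
      rw [← hlawμ]
      exact (indepFun_iff_map_prod_eq_prod_map_map hVmeas.aemeasurable
        (hmeas _).aemeasurable).1 hindepVY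
    set E : Set ((S' → ℝ) × ℝ) := {p | ∀ i, p.1 i < p.2} with hE
    have hEmeas : MeasurableSet E := by
      have : E = ⋂ i : S', {p : (S' → ℝ) × ℝ | p.1 i < p.2} := by
        ext p; simp [hE]
      rw [this]
      exact MeasurableSet.iInter fun i =>
        measurableSet_lt (measurable_fst.eval) measurable_snd
    have hpre : {ω | ∀ i ∈ S, X i.castSucc ω < X (Fin.last K) ω}
        = (fun ω => (V ω, X (Fin.last K) ω)) ⁻¹' E := by
      ext ω
      simp only [hE, hV, Set.mem_setOf_eq, Set.mem_preimage, Subtype.forall, hS',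
        Finset.mem_map, Function.Embedding.coeFn_mk]
      constructor
      · rintro h i ⟨j, hj, rfl⟩
        exact h j hj
      · intro h j hj
        exact h j.castSucc ⟨j, hj, rfl⟩
    rw [hpre, ← Measure.map_apply (hVmeas.prodMk (hmeas _)) hEmeas, hmap,
      Measure.prod_apply_symm hEmeas]
    refine lintegral_congr fun y => ?_
    have hsetmeas : MeasurableSet ((fun x => (x, y)) ⁻¹' E) :=
      (measurable_id.prodMk measurable_const) hEmeas
    rw [Measure.map_apply hVmeas hsetmeas]
    have hpre2 : V ⁻¹' ((fun x => (x, y)) ⁻¹' E) = ⋂ i ∈ S', X i ⁻¹' Iio y := by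
      ext ω
      simp [hE, hV, Set.mem_iInter, Subtype.forall]
    rw [hpre2,
      hindep.measure_inter_preimage_eq_mul S' (fun i _ => measurableSet_Iio)]
    have hfac : ∀ i ∈ S', P (X i ⁻¹' Iio y) = ν (Iio y) := by
      intro i hi
      obtain ⟨j, hj, rfl⟩ := Finset.mem_map.1 hi
      rw [← hlawν j, Measure.map_apply (hmeas _) measurableSet_Iio]
      rfl
    rw [Finset.prod_congr rfl hfac, Finset.prod_const, hS'card]
  -- splitting over the value of the count
  have hCntle : ∀ ω, Cnt ω ≤ K := by
    intro ω
    simpa using (Finset.card_filter_le Finset.univ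
      (fun i : Fin K => X i.castSucc ω < X (Fin.last K) ω))
  have hsplit : ∀ S : Finset (Fin K),
      P {ω | ∀ i ∈ S, X i.castSucc ω < X (Fin.last K) ω}
        = ∑ j ∈ Finset.range (K + 1),
            P ({ω | ∀ i ∈ S, X i.castSucc ω < X (Fin.last K) ω} ∩ B j) := by
    intro S
    rw [← measure_biUnion_finset ?_ fun j _ => (hABmeas S).inter (hBmeas j)]
    · congr 1
      ext ω
      simp only [Set.mem_iUnion, Set.mem_inter_iff, Finset.mem_range, Set.mem_setOf_eq,
        exists_prop, hB]
      constructor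
      · intro h
        exact ⟨Cnt ω, Nat.lt_succ_of_le (hCntle ω), h, rfl⟩
      · rintro ⟨j, -, h, -⟩
        exact h
    · intro a _ b _ hab
      refine Set.disjoint_left.2 fun ω h1 h2 => hab ?_
      have ha : Cnt ω = a := h1.2
      have hb : Cnt ω = b := h2.2
      rw [← ha, hb]
  -- inner combinatorial identity
  have hinner : ∀ j ∈ Finset.range (K + 1),
      ∑ S ∈ Finset.powersetCard n (Finset.univ : Finset (Fin K)),
          P ({ω | ∀ i ∈ S, X i.castSucc ω < X (Fin.last K) ω} ∩ B j)
        = (j.choose n : ℝ≥0∞) * P (B j) := by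
    intro j _
    have hpt : ∀ ω, ∑ S ∈ Finset.powersetCard n (Finset.univ : Finset (Fin K)),
        Set.indicator ({ω | ∀ i ∈ S, X i.castSucc ω < X (Fin.last K) ω} ∩ B j)
          (fun _ => (1 : ℝ≥0∞)) ω
        = Set.indicator (B j) (fun _ => (j.choose n : ℝ≥0∞)) ω := by
      intro ω
      by_cases hω : ω ∈ B j
      · rw [Set.indicator_of_mem hω]
        set T : Finset (Fin K) :=
          Finset.univ.filter (fun i : Fin K => X i.castSucc ω < X (Fin.last K) ω) with hT
        have hTcard : T.card = j := hω
        have hmem : ∀ S : Finset (Fin K),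
            (ω ∈ {ω | ∀ i ∈ S, X i.castSucc ω < X (Fin.last K) ω} ∩ B j) ↔ S ⊆ T := by
          intro S
          simp only [Set.mem_inter_iff, Set.mem_setOf_eq, hT, Finset.subset_iff,
            Finset.mem_filter, Finset.mem_univ, true_and]
          exact ⟨fun h i hi => h.1 i hi, fun h => ⟨fun i hi => h i hi, hω⟩⟩
        calc ∑ S ∈ Finset.powersetCard n (Finset.univ : Finset (Fin K)),
              Set.indicator ({ω | ∀ i ∈ S, X i.castSucc ω < X (Fin.last K) ω} ∩ B j)
                (fun _ => (1 : ℝ≥0∞)) ω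
            = ∑ S ∈ Finset.powersetCard n (Finset.univ : Finset (Fin K)),
              if S ⊆ T then (1 : ℝ≥0∞) else 0 := by
              refine Finset.sum_congr rfl fun S _ => ?_
              rw [Set.indicator_apply]
              simp only [hmem S]
          _ = (((Finset.powersetCard n (Finset.univ : Finset (Fin K))).filter
                (fun S => S ⊆ T)).card : ℝ≥0∞) := by
              rw [Finset.sum_boole]
          _ = (j.choose n : ℝ≥0∞) := by
              congr 1
              have hfil : (Finset.powersetCard n (Finset.univ : Finset (Fin K))).filter
                  (fun S => S ⊆ T) = Finset.powersetCard n T := by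
                ext S
                simp only [Finset.mem_filter, Finset.mem_powersetCard, Finset.subset_univ,
                  true_and]
                tauto
              rw [hfil, Finset.card_powersetCard, hTcard]
      · rw [Set.indicator_of_notMem hω]
        refine Finset.sum_eq_zero fun S _ => ?_
        exact Set.indicator_of_notMem (fun h => hω h.2) _
    calc ∑ S ∈ Finset.powersetCard n (Finset.univ : Finset (Fin K)),
          P ({ω | ∀ i ∈ S, X i.castSucc ω < X (Fin.last K) ω} ∩ B j)
        = ∑ S ∈ Finset.powersetCard n (Finset.univ : Finset (Fin K)),
          ∫⁻ ω, Set.indicator ({ω | ∀ i ∈ S, X i.castSucc ω < X (Fin.last K) ω} ∩ B j)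
            (fun _ => (1 : ℝ≥0∞)) ω ∂P := by
          refine Finset.sum_congr rfl fun S _ => ?_
          rw [lintegral_indicator_const ((hABmeas S).inter (hBmeas j)), one_mul]
      _ = ∫⁻ ω, ∑ S ∈ Finset.powersetCard n (Finset.univ : Finset (Fin K)),
          Set.indicator ({ω | ∀ i ∈ S, X i.castSucc ω < X (Fin.last K) ω} ∩ B j)
            (fun _ => (1 : ℝ≥0∞)) ω ∂P := by
          rw [lintegral_finset_sum]
          exact fun S _ => measurable_const.indicator ((hABmeas S).inter (hBmeas j))
      _ = ∫⁻ ω, Set.indicator (B j) (fun _ => (j.choose n : ℝ≥0∞)) ω ∂P :=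
          lintegral_congr hpt
      _ = (j.choose n : ℝ≥0∞) * P (B j) := lintegral_indicator_const (hBmeas j) _
  -- hockey stick
  have hhs : ∑ j ∈ Finset.range (K + 1), j.choose n = (K + 1).choose (n + 1) := by
    rw [← Nat.sum_Icc_choose]
    refine (Finset.sum_subset ?_ ?_).symm.trans rfl
    · intro j hj
      simp only [Finset.mem_Icc] at hj
      simp only [Finset.mem_range]
      omega
    · intro j hj hnot
      simp only [Finset.mem_range] at hj
      simp only [Finset.mem_Icc] at hnot
      exact Nat.choose_eq_zero_of_lt (by omega)
  -- main identity
  have key : (K.choose n : ℝ≥0∞) * ∫⁻ y, (ν (Iio y)) ^ n ∂μ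
      = ((K + 1).choose (n + 1) : ℝ≥0∞) / (K + 1) := by
    calc (K.choose n : ℝ≥0∞) * ∫⁻ y, (ν (Iio y)) ^ n ∂μ
        = ∑ S ∈ Finset.powersetCard n (Finset.univ : Finset (Fin K)),
            P {ω | ∀ i ∈ S, X i.castSucc ω < X (Fin.last K) ω} := by
          rw [Finset.sum_congr rfl (fun S hS => by
            rw [lemA S, (Finset.mem_powersetCard.1 hS).2])]
          rw [Finset.sum_const, Finset.card_powersetCard, Finset.card_univ,
            Fintype.card_fin, nsmul_eq_mul]
      _ = ∑ S ∈ Finset.powersetCard n (Finset.univ : Finset (Fin K)),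
            ∑ j ∈ Finset.range (K + 1),
              P ({ω | ∀ i ∈ S, X i.castSucc ω < X (Fin.last K) ω} ∩ B j) :=
          Finset.sum_congr rfl fun S _ => hsplit S
      _ = ∑ j ∈ Finset.range (K + 1),
            ∑ S ∈ Finset.powersetCard n (Finset.univ : Finset (Fin K)),
              P ({ω | ∀ i ∈ S, X i.castSucc ω < X (Fin.last K) ω} ∩ B j) :=
          Finset.sum_comm
      _ = ∑ j ∈ Finset.range (K + 1), (j.choose n : ℝ≥0∞) * P (B j) :=
          Finset.sum_congr rfl hinner
      _ = ∑ j ∈ Finset.range (K + 1), (j.choose n : ℝ≥0∞) * (1 / (K + 1)) := by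
          refine Finset.sum_congr rfl fun j hj => ?_
          rw [huniform j (Nat.lt_succ_iff.1 (Finset.mem_range.1 hj))]
      _ = ((∑ j ∈ Finset.range (K + 1), j.choose n : ℕ) : ℝ≥0∞) * (1 / (K + 1)) := by
          rw [← Finset.sum_mul]
          push_cast
          ring
      _ = ((K + 1).choose (n + 1) : ℝ≥0∞) / (K + 1) := by
          rw [hhs, one_div, div_eq_mul_inv]
  -- solve for the moment
  have hchoose : (K + 1) * K.choose n = (K + 1).choose (n + 1) * (n + 1) :=
    Nat.add_one_mul_choose_eq K n
  have hI : ∫⁻ y, (ν (Iio y)) ^ n ∂μ = 1 / ((n : ℝ≥0∞) + 1) := by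
    have hd0 : ((K : ℝ≥0∞) + 1) ≠ 0 := by
      have h : ((K : ℝ≥0∞) + 1) = ((K + 1 : ℕ) : ℝ≥0∞) := by push_cast; ring
      rw [h]
      exact_mod_cast Nat.succ_ne_zero K
    have hdt : ((K : ℝ≥0∞) + 1) ≠ ⊤ := by
      simp [ENNReal.add_ne_top]
    have ha0 : (K.choose n : ℝ≥0∞) ≠ 0 := by
      exact_mod_cast (Nat.choose_pos hn).ne'
    have hat : (K.choose n : ℝ≥0∞) ≠ ⊤ := ENNReal.natCast_ne_top _
    have hcast : ((n : ℝ≥0∞) + 1) * ((K + 1).choose (n + 1) : ℝ≥0∞)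
        = ((K : ℝ≥0∞) + 1) * (K.choose n : ℝ≥0∞) := by
      calc ((n : ℝ≥0∞) + 1) * ((K + 1).choose (n + 1) : ℝ≥0∞)
          = (((K + 1).choose (n + 1) * (n + 1) : ℕ) : ℝ≥0∞) := by push_cast; ring
        _ = (((K + 1) * K.choose n : ℕ) : ℝ≥0∞) := by rw [hchoose]
        _ = ((K : ℝ≥0∞) + 1) * (K.choose n : ℝ≥0∞) := by push_cast; ring
    have hmul : (K.choose n : ℝ≥0∞) * (((n : ℝ≥0∞) + 1) * ∫⁻ y, (ν (Iio y)) ^ n ∂μ)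
        = (K.choose n : ℝ≥0∞) * 1 := by
      rw [mul_one]
      calc (K.choose n : ℝ≥0∞) * (((n : ℝ≥0∞) + 1) * ∫⁻ y, (ν (Iio y)) ^ n ∂μ)
          = ((n : ℝ≥0∞) + 1) * ((K.choose n : ℝ≥0∞) * ∫⁻ y, (ν (Iio y)) ^ n ∂μ) := by
            ring
        _ = ((n : ℝ≥0∞) + 1) * (((K + 1).choose (n + 1) : ℝ≥0∞) / (K + 1)) := by rw [key]
        _ = (((n : ℝ≥0∞) + 1) * ((K + 1).choose (n + 1) : ℝ≥0∞)) / ((K : ℝ≥0∞) + 1) := by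
            rw [mul_div_assoc]
        _ = (((K : ℝ≥0∞) + 1) * (K.choose n : ℝ≥0∞)) / ((K : ℝ≥0∞) + 1) := by rw [hcast]
        _ = (K.choose n : ℝ≥0∞) := by
            rw [mul_comm, mul_div_assoc, ENNReal.div_self hd0 hdt, mul_one]
    have hcancel : ((n : ℝ≥0∞) + 1) * ∫⁻ y, (ν (Iio y)) ^ n ∂μ = 1 :=
      (ENNReal.mul_right_inj ha0 hat).1 hmul
    have hn0 : ((n : ℝ≥0∞) + 1) ≠ 0 := by
      have h : ((n : ℝ≥0∞) + 1) = ((n + 1 : ℕ) : ℝ≥0∞) := by push_cast; ring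
      rw [h]
      exact_mod_cast Nat.succ_ne_zero n
    have hnt : ((n : ℝ≥0∞) + 1) ≠ ⊤ := by simp [ENNReal.add_ne_top]
    exact (ENNReal.eq_div_iff hn0 hnt).2 hcancel
  -- convert to the Bochner integral
  have hmeascdf : Measurable fun y => (cdf ν y) ^ n :=
    ((monotone_cdf (μ := ν)).measurable).pow_const n
  have hnn : 0 ≤ᵐ[μ] fun y => (cdf ν y) ^ n :=
    Filter.Eventually.of_forall fun y => pow_nonneg (cdf_nonneg (μ := ν) y) n
  rw [integral_eq_lintegral_of_nonneg_ae hnn hmeascdf.aestronglyMeasurable]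
  have hpt : ∀ y, ENNReal.ofReal ((cdf ν y) ^ n) = (ν (Iio y)) ^ n := fun y => by
    rw [ENNReal.ofReal_pow (cdf_nonneg (μ := ν) _), hq]
  rw [lintegral_congr hpt, hI]
  rw [ENNReal.toReal_div, ENNReal.toReal_add (ENNReal.natCast_ne_top n) ENNReal.one_ne_top]
  simp
end

section
/- Let μ be a probability measure on [0,1] and for each K let X_K be the mixed binomial variable P(X_K = n) = ∫₀¹ C(K,n) qⁿ(1−q)^{K−n} dμ(q). If X_K is uniform on {0,…,K} for every K ∈ ℕ, then μ is the Lebesgue (uniform) measure on [0,1]. -/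
open MeasureTheory Set

/-- **De Finetti / Hausdorff moment argument.** Let `μ` be a probability measure on `ℝ`
supported on `[0,1]`, and for each `K` let `X_K` be the mixed binomial with
`P(X_K = n) = ∫₀¹ C(K,n) q^n (1-q)^(K-n) dμ(q)`.  If `X_K` is uniform on `{0, …, K}` for
every `K`, then `μ` is the Lebesgue (uniform) measure on `[0,1]`. -/
theorem mixed_binomial_uniform_all_K
    (μ : Measure ℝ) [IsProbabilityMeasure μ] (hsupp : μ (Icc (0 : ℝ) 1) = 1)
    (huniform : ∀ K : ℕ, ∀ n : ℕ, n ≤ K →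
      (∫ q, (K.choose n : ℝ) * q ^ n * (1 - q) ^ (K - n) ∂μ) = 1 / (K + 1)) :
    μ = volume.restrict (Icc (0 : ℝ) 1) := by
  set ν : Measure ℝ := volume.restrict (Icc (0 : ℝ) 1) with hν
  -- μ is a.e. supported on [0,1]
  have hae : ∀ᵐ x ∂μ, x ∈ Icc (0 : ℝ) 1 := by
    rw [ae_iff]
    have : μ (Icc (0 : ℝ) 1)ᶜ = 0 := by
      rw [measure_compl measurableSet_Icc (measure_ne_top μ _), hsupp,
        measure_univ, tsub_self]
    exact this
  have hμr : μ.restrict (Icc (0 : ℝ) 1) = μ :=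
    Measure.restrict_eq_self_of_ae_mem hae
  have hνae : ∀ᵐ x ∂ν, x ∈ Icc (0 : ℝ) 1 := ae_restrict_mem measurableSet_Icc
  -- integrability of continuous functions against both measures
  have hintμ : ∀ f : ℝ → ℝ, Continuous f → Integrable f μ := by
    intro f hf
    rw [← hμr]
    exact hf.integrableOn_Icc
  have hintν : ∀ f : ℝ → ℝ, Continuous f → Integrable f ν := by
    intro f hf
    exact hf.integrableOn_Icc
  -- moments of μ
  have hmomμ : ∀ n : ℕ, (∫ q, q ^ n ∂μ) = 1 / (n + 1) := by
    intro n
    have h := huniform n n le_rfl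
    simp only [Nat.choose_self, Nat.cast_one, Nat.sub_self, pow_zero, mul_one,
      one_mul] at h
    exact h
  -- moments of ν
  have hmomν : ∀ n : ℕ, (∫ q, q ^ n ∂ν) = 1 / (n + 1) := by
    intro n
    rw [hν]
    rw [integral_Icc_eq_integral_Ioc, ← intervalIntegral.integral_of_le zero_le_one,
      integral_pow]
    simp
  -- integrals of polynomials agree
  have hpoly : ∀ p : Polynomial ℝ, (∫ q, p.eval q ∂μ) = ∫ q, p.eval q ∂ν := by
    intro p
    have hev : ∀ q : ℝ, p.eval q =
        ∑ i ∈ Finset.range (p.natDegree + 1), p.coeff i * q ^ i := by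
      intro q; exact Polynomial.eval_eq_sum_range q
    simp_rw [hev]
    rw [integral_finset_sum, integral_finset_sum]
    · refine Finset.sum_congr rfl fun i _ => ?_
      rw [integral_const_mul, integral_const_mul, hmomμ, hmomν]
    · exact fun i _ => hintν _ (continuous_const.mul (continuous_pow i))
    · exact fun i _ => hintμ _ (continuous_const.mul (continuous_pow i))
  -- integrals of continuous functions agree
  have hcont : ∀ f : ℝ → ℝ, Continuous f → (∫ q, f q ∂μ) = ∫ q, f q ∂ν := by
    intro f hf
    have key : ∀ ε : ℝ, 0 < ε → |(∫ q, f q ∂μ) - ∫ q, f q ∂ν| ≤ 2 * ε := by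
      intro ε hε
      obtain ⟨p, hp⟩ := exists_polynomial_near_of_continuousOn 0 1 f
        hf.continuousOn ε hε
      have h1 : |(∫ q, f q ∂μ) - ∫ q, p.eval q ∂μ| ≤ ε := by
        rw [← integral_sub (hintμ f hf) (hintμ _ p.continuous)]
        calc |∫ q, (f q - p.eval q) ∂μ| = ‖∫ q, (f q - p.eval q) ∂μ‖ := rfl
          _ ≤ ε * (μ Set.univ).toReal := by
              apply norm_integral_le_of_norm_le_const
              filter_upwards [hae] with x hx
              rw [Real.norm_eq_abs, abs_sub_comm]
              exact (hp x hx).le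
          _ = ε := by simp
      have h2 : |(∫ q, f q ∂ν) - ∫ q, p.eval q ∂ν| ≤ ε := by
        rw [← integral_sub (hintν f hf) (hintν _ p.continuous)]
        calc |∫ q, (f q - p.eval q) ∂ν| = ‖∫ q, (f q - p.eval q) ∂ν‖ := rfl
          _ ≤ ε * (ν Set.univ).toReal := by
              apply norm_integral_le_of_norm_le_const
              filter_upwards [hνae] with x hx
              rw [Real.norm_eq_abs, abs_sub_comm]
              exact (hp x hx).le
          _ ≤ ε := by
              have : ν Set.univ = 1 := by
                rw [hν, Measure.restrict_apply_univ, Real.volume_Icc]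
                norm_num
              simp [this]
      have := hpoly p
      calc |(∫ q, f q ∂μ) - ∫ q, f q ∂ν|
          = |((∫ q, f q ∂μ) - ∫ q, p.eval q ∂μ) -
            ((∫ q, f q ∂ν) - ∫ q, p.eval q ∂ν)| := by rw [this]; ring_nf
        _ ≤ |(∫ q, f q ∂μ) - ∫ q, p.eval q ∂μ| +
            |(∫ q, f q ∂ν) - ∫ q, p.eval q ∂ν| := abs_sub _ _
        _ ≤ 2 * ε := by linarith
    have : |(∫ q, f q ∂μ) - ∫ q, f q ∂ν| ≤ 0 := by
      refine le_of_forall_pos_le_add fun ε hε => ?_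
      have := key (ε / 2) (by linarith)
      linarith
    have := abs_nonneg ((∫ q, f q ∂μ) - ∫ q, f q ∂ν)
    have h0 : |(∫ q, f q ∂μ) - ∫ q, f q ∂ν| = 0 := le_antisymm ‹_› ‹_›
    have := abs_eq_zero.mp h0
    linarith
  -- conclude by equality of lintegrals of bounded continuous ℝ≥0-valued functions
  apply ext_of_forall_lintegral_eq_of_IsFiniteMeasure
  intro f
  have hfc : Continuous fun x => (f x : ℝ) := NNReal.continuous_coe.comp f.continuous
  rw [lintegral_coe_eq_integral _ (hintμ _ hfc), lintegral_coe_eq_integral _ (hintν _ hfc),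
    hcont _ hfc]
end

section
/- If the mixed binomial distribution P(X_K = n) = ∫₀¹ C(K,n) qⁿ(1−q)^{K−n} dμ(q) is uniform on {0,…,K} for a fixed K, then ∫₀¹ qⁿ dμ(q) = 1/(n+1) for all n ∈ {0,…,K}. -/
open MeasureTheory Set Finset

/-- Combinatorial identity: `∑ i ≤ d, C(d,i)/C(n+d,n+i) = (n+d+1)/(n+1)` over ℝ. -/
lemma sum_choose_div_choose (n d : ℕ) :
    ∑ i ∈ Finset.range (d + 1),
      (d.choose i : ℝ) / ((n + d).choose (n + i)) = (n + d + 1) / (n + 1) := by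
  have hden : ((n + d).choose n : ℝ) ≠ 0 := by
    exact_mod_cast (Nat.choose_pos (Nat.le_add_right n d)).ne'
  have hstep : ∀ i ∈ Finset.range (d + 1),
      (d.choose i : ℝ) / ((n + d).choose (n + i))
        = ((n + i).choose n : ℝ) / ((n + d).choose n) := by
    intro i hi
    have hi' : i ≤ d := Nat.lt_succ_iff.mp (Finset.mem_range.mp hi)
    have key : (n + d).choose (n + i) * (n + i).choose n
        = (n + d).choose n * d.choose i := by
      have := Nat.choose_mul (n := n + d) (k := n + i) (s := n)
        (Nat.le_add_right n i)
      simpa [Nat.add_sub_cancel_left] using this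
    have hpos : ((n + d).choose (n + i) : ℝ) ≠ 0 := by
      exact_mod_cast (Nat.choose_pos (by omega)).ne'
    have keyR : ((n + d).choose (n + i) : ℝ) * ((n + i).choose n)
        = ((n + d).choose n) * (d.choose i) := by exact_mod_cast key
    field_simp
    linarith [keyR]
  rw [Finset.sum_congr rfl hstep, ← Finset.sum_div]
  have hhs : ∑ i ∈ Finset.range (d + 1), ((n + i).choose n : ℝ)
      = ((n + d + 1).choose (n + 1) : ℝ) := by
    have hnat : ∑ i ∈ Finset.range (d + 1), (n + i).choose n
        = (n + d + 1).choose (n + 1) := by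
      rw [← Nat.sum_Icc_choose, ← Finset.Ico_add_one_right_eq_Icc, Finset.sum_Ico_eq_sum_range]
      exact Finset.sum_congr (by rw [show n + d + 1 - n = d + 1 from by omega]) fun i _ => rfl
    exact_mod_cast hnat
  rw [hhs]
  have hmul : ((n : ℝ) + 1) * ((n + d + 1).choose (n + 1))
      = ((n : ℝ) + d + 1) * ((n + d).choose n) := by
    have := Nat.add_one_mul_choose_eq (n + d) n
    have : ((n + d + 1) * (n + d).choose n : ℝ)
        = ((n + d + 1).choose (n + 1) * (n + 1) : ℝ) := by exact_mod_cast this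
    push_cast at this ⊢
    linarith
  have hn1 : ((n : ℝ) + 1) ≠ 0 := by positivity
  field_simp
  linarith [hmul]

/-- If, for a fixed `K`, the mixed binomial distribution
`P(X_K = n) = ∫₀¹ C(K,n) q^n (1-q)^(K-n) dμ(q)` is uniform on `{0, …, K}`, then
`∫₀¹ q^n dμ(q) = 1/(n+1)` for all `n ∈ {0, …, K}`. -/
theorem mixed_binomial_uniform_implies_moments
    (μ : Measure ℝ) [IsProbabilityMeasure μ] (hsupp : μ (Icc (0 : ℝ) 1) = 1)
    (K : ℕ)
    (huniform : ∀ n : ℕ, n ≤ K →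
      (∫ q, (K.choose n : ℝ) * q ^ n * (1 - q) ^ (K - n) ∂μ) = 1 / (K + 1)) :
    ∀ n : ℕ, n ≤ K → (∫ q, q ^ n ∂μ) = 1 / (n + 1) := by
  -- μ is concentrated on [0,1]
  have hcompl : μ (Icc (0 : ℝ) 1)ᶜ = 0 := by
    rw [measure_compl measurableSet_Icc (measure_ne_top μ _), hsupp, measure_univ]
    simp
  have hrestrict : μ.restrict (Icc (0 : ℝ) 1) = μ :=
    Measure.restrict_eq_self_of_ae_mem (by
      rw [MeasureTheory.ae_iff]
      exact hcompl)
  -- integrability of all monomial-type integrands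
  have hint : ∀ a b : ℕ, Integrable (fun q : ℝ => q ^ a * (1 - q) ^ b) μ := by
    intro a b
    rw [← hrestrict]
    exact ContinuousOn.integrableOn_compact isCompact_Icc
      (Continuous.continuousOn (by continuity))
  -- value of each basic integral
  have hbase : ∀ m : ℕ, m ≤ K →
      (∫ q, q ^ m * (1 - q) ^ (K - m) ∂μ) = 1 / ((K + 1) * (K.choose m)) := by
    intro m hm
    have hc : ((K.choose m : ℝ)) ≠ 0 := by
      exact_mod_cast (Nat.choose_pos hm).ne'
    have h1 := huniform m hm
    have h2 : (∫ q, (K.choose m : ℝ) * q ^ m * (1 - q) ^ (K - m) ∂μ)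
        = (K.choose m : ℝ) * ∫ q, q ^ m * (1 - q) ^ (K - m) ∂μ := by
      rw [← integral_const_mul]
      congr 1; ext q; ring
    rw [h2] at h1
    have hK1 : ((K : ℝ) + 1) ≠ 0 := by positivity
    field_simp at h1 ⊢
    linarith
  intro n hn
  set d := K - n with hd
  have hKnd : K = n + d := by omega
  -- pointwise expansion of q^n
  have hpt : ∀ q : ℝ, q ^ n
      = ∑ i ∈ Finset.range (d + 1),
          (d.choose i : ℝ) * (q ^ (n + i) * (1 - q) ^ (K - (n + i))) := by
    intro q
    have h1 : (1 : ℝ) = (q + (1 - q)) ^ d := by ring_nf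
    calc q ^ n = q ^ n * (q + (1 - q)) ^ d := by rw [← h1]; ring
      _ = q ^ n * ∑ i ∈ Finset.range (d + 1),
            q ^ i * (1 - q) ^ (d - i) * (d.choose i : ℝ) := by rw [add_pow]
      _ = ∑ i ∈ Finset.range (d + 1),
          (d.choose i : ℝ) * (q ^ (n + i) * (1 - q) ^ (K - (n + i))) := by
          rw [Finset.mul_sum]
          refine Finset.sum_congr rfl fun i hi => ?_
          have : K - (n + i) = d - i := by omega
          rw [this, pow_add]
          ring
  have hintsum : (∫ q, q ^ n ∂μ)
      = ∑ i ∈ Finset.range (d + 1),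
          (d.choose i : ℝ) * ∫ q, q ^ (n + i) * (1 - q) ^ (K - (n + i)) ∂μ := by
    calc (∫ q, q ^ n ∂μ)
        = ∫ q, ∑ i ∈ Finset.range (d + 1),
            (d.choose i : ℝ) * (q ^ (n + i) * (1 - q) ^ (K - (n + i))) ∂μ := by
          congr 1; ext q; exact hpt q
      _ = ∑ i ∈ Finset.range (d + 1),
            ∫ q, (d.choose i : ℝ) * (q ^ (n + i) * (1 - q) ^ (K - (n + i))) ∂μ := by
          exact integral_finset_sum _ fun i _ => (hint (n + i) (K - (n + i))).const_mul _
      _ = ∑ i ∈ Finset.range (d + 1),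
            (d.choose i : ℝ) * ∫ q, q ^ (n + i) * (1 - q) ^ (K - (n + i)) ∂μ := by
          refine Finset.sum_congr rfl fun i _ => integral_const_mul _ _
  rw [hintsum]
  have hval : ∀ i ∈ Finset.range (d + 1),
      (d.choose i : ℝ) * ∫ q, q ^ (n + i) * (1 - q) ^ (K - (n + i)) ∂μ
        = (1 / (K + 1)) * ((d.choose i : ℝ) / ((n + d).choose (n + i))) := by
    intro i hi
    have hi' : i ≤ d := Nat.lt_succ_iff.mp (Finset.mem_range.mp hi)
    have hle : n + i ≤ K := by omega
    rw [hbase (n + i) hle]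
    rw [hKnd]
    have hK1 : ((K : ℝ) + 1) ≠ 0 := by positivity
    have hc : (((n + d).choose (n + i) : ℝ)) ≠ 0 := by
      exact_mod_cast (Nat.choose_pos (by omega)).ne'
    rw [hKnd] at hK1
    push_cast at hK1 ⊢
    field_simp
  rw [Finset.sum_congr rfl hval, ← Finset.mul_sum, sum_choose_div_choose n d]
  have hK1 : ((K : ℝ) + 1) ≠ 0 := by positivity
  have hKnd' : ((K : ℝ) + 1) = (n : ℝ) + d + 1 := by
    rw [hKnd]; push_cast; ring
  rw [hKnd']
  have h1 : ((n : ℝ) + d + 1) ≠ 0 := by positivity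
  have h2 : ((n : ℝ) + 1) ≠ 0 := by positivity
  field_simp
end
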